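/- Let A and B be n×n Hermitian matrices. Then ∑_{j=1}^n (λ_j(A) − λ_j(B))² ≤ Tr((A − B)²), where λ_j denotes the j-th largest eigenvalue. -/

import Mathlib

open Matrix Finset

/-- Rearrangement-type bound for doubly stochastic matrices. -/
lemma ds_rearrange {n : ℕ} (S : Matrix (Fin n) (Fin n) ℝ)
    (hS : S ∈ doublyStochastic ℝ (Fin n)) (a b : Fin n → ℝ)
    (ha : Antitone a) (hb : Antitone b) :
    ∑ i, ∑ j, S i j * (a i * b j) ≤ ∑ i, a i * b i := by
  obtain ⟨w, hw0, hw1, hwS⟩ := exists_eq_sum_perm_of_mem_doublyStochastic hS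
  have hperm : ∀ σ : Equiv.Perm (Fin n),
      (∑ i, ∑ j, w σ * ((σ.permMatrix ℝ) i j * (a i * b j))) = w σ * ∑ i, a i * b (σ i) := by
    intro σ
    rw [Finset.mul_sum]
    refine Finset.sum_congr rfl fun i _ => ?_
    rw [← Finset.mul_sum, Finset.sum_eq_single (σ i)]
    · simp [Equiv.Perm.permMatrix, PEquiv.toMatrix_apply, Equiv.toPEquiv_apply]
    · intro j _ hj
      simp [Equiv.Perm.permMatrix, PEquiv.toMatrix_apply, Equiv.toPEquiv_apply, Ne.symm hj]
    · simp
  have hmono : Monovary a b := ha.monovary hb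
  have key : ∑ i, ∑ j, S i j * (a i * b j)
      = ∑ σ : Equiv.Perm (Fin n), w σ * ∑ i, a i * b (σ i) := by
    rw [← hwS]
    calc ∑ i, ∑ j, (∑ σ : Equiv.Perm (Fin n), w σ • σ.permMatrix ℝ) i j * (a i * b j)
        = ∑ i, ∑ j, ∑ σ : Equiv.Perm (Fin n), w σ * ((σ.permMatrix ℝ) i j * (a i * b j)) := by
          refine Finset.sum_congr rfl fun i _ => Finset.sum_congr rfl fun j _ => ?_
          rw [Matrix.sum_apply, Finset.sum_mul]
          exact Finset.sum_congr rfl fun σ _ => by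
            rw [Matrix.smul_apply, smul_eq_mul, mul_assoc]
      _ = ∑ i, ∑ σ : Equiv.Perm (Fin n), ∑ j,
            w σ * ((σ.permMatrix ℝ) i j * (a i * b j)) :=
          Finset.sum_congr rfl fun i _ => Finset.sum_comm
      _ = ∑ σ : Equiv.Perm (Fin n), ∑ i, ∑ j,
            w σ * ((σ.permMatrix ℝ) i j * (a i * b j)) := Finset.sum_comm
      _ = ∑ σ : Equiv.Perm (Fin n), w σ * ∑ i, a i * b (σ i) :=
          Finset.sum_congr rfl fun σ _ => hperm σ
  rw [key]
  calc ∑ σ : Equiv.Perm (Fin n), w σ * ∑ i, a i * b (σ i)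
      ≤ ∑ σ : Equiv.Perm (Fin n), w σ * ∑ i, a i * b i := by
        refine Finset.sum_le_sum fun σ _ => ?_
        exact mul_le_mul_of_nonneg_left (hmono.sum_mul_comp_perm_le_sum_mul) (hw0 σ)
    _ = ∑ i, a i * b i := by rw [← Finset.sum_mul, hw1, one_mul]

/-- Trace of `diagonal d * W * diagonal e * star W`, entrywise. -/
lemma trace_diag_conj {n : ℕ} (d e : Fin n → ℝ) (W : Matrix (Fin n) (Fin n) ℂ) :
    ((diagonal (fun i => (d i : ℂ)) * W * diagonal (fun j => (e j : ℂ)) * star W).trace).re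
      = ∑ i, ∑ j, d i * e j * Complex.normSq (W i j) := by
  have h : ∀ i j, (diagonal (fun i => (d i : ℂ)) * W * diagonal (fun j => (e j : ℂ))) i j
      = (d i : ℂ) * W i j * (e j : ℂ) := by
    intro i j
    rw [Matrix.mul_diagonal, Matrix.mul_apply]
    congr 1
    rw [Finset.sum_eq_single i]
    · simp [Matrix.diagonal_apply_eq]
    · intro k _ hk
      simp [Matrix.diagonal_apply_ne' _ hk]
    · simp
  have htr : (diagonal (fun i => (d i : ℂ)) * W * diagonal (fun j => (e j : ℂ)) * star W).trace
      = ∑ i, ∑ j, ((d i * e j * Complex.normSq (W i j) : ℝ) : ℂ) := by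
    rw [Matrix.trace]
    refine Finset.sum_congr rfl fun i _ => ?_
    rw [Matrix.diag_apply, Matrix.mul_apply]
    refine Finset.sum_congr rfl fun j _ => ?_
    rw [h i j]
    have : (star W : Matrix (Fin n) (Fin n) ℂ) j i = (starRingEnd ℂ) (W i j) := rfl
    rw [this]
    have hmc : W i j * (starRingEnd ℂ) (W i j) = ((Complex.normSq (W i j) : ℝ) : ℂ) :=
      Complex.mul_conj _
    push_cast
    calc (d i : ℂ) * W i j * (e j : ℂ) * (starRingEnd ℂ) (W i j)
        = (d i : ℂ) * (e j : ℂ) * (W i j * (starRingEnd ℂ) (W i j)) := by ring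
      _ = (d i : ℂ) * (e j : ℂ) * ((Complex.normSq (W i j) : ℝ) : ℂ) := by rw [hmc]
  rw [htr, Complex.re_sum]
  refine Finset.sum_congr rfl fun i _ => ?_
  rw [Complex.re_sum]
  refine Finset.sum_congr rfl fun j _ => ?_
  exact Complex.ofReal_re _

/-- Trace of a product of two Hermitian matrices in terms of eigen-data. -/
lemma trace_mul_herm {n : ℕ} (A B : Matrix (Fin n) (Fin n) ℂ)
    (hA : A.IsHermitian) (hB : B.IsHermitian) :
    ((A * B).trace).re = ∑ i, ∑ j, hA.eigenvalues i * hB.eigenvalues j *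
      Complex.normSq ((star (hA.eigenvectorUnitary : Matrix (Fin n) (Fin n) ℂ) *
        (hB.eigenvectorUnitary : Matrix (Fin n) (Fin n) ℂ)) i j) := by
  set U : Matrix (Fin n) (Fin n) ℂ := (hA.eigenvectorUnitary : Matrix (Fin n) (Fin n) ℂ) with hU
  set V : Matrix (Fin n) (Fin n) ℂ := (hB.eigenvectorUnitary : Matrix (Fin n) (Fin n) ℂ) with hV
  set Dμ : Matrix (Fin n) (Fin n) ℂ :=
    diagonal (fun i => ((hA.eigenvalues i : ℝ) : ℂ)) with hDμ
  set Dν : Matrix (Fin n) (Fin n) ℂ :=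
    diagonal (fun i => ((hB.eigenvalues i : ℝ) : ℂ)) with hDν
  have hAeq : A = U * Dμ * star U := by
    have := hA.spectral_theorem
    exact this
  have hBeq : B = V * Dν * star V := by
    have := hB.spectral_theorem
    exact this
  have key : (A * B).trace = (Dμ * (star U * V) * Dν * star (star U * V)).trace := by
    rw [hAeq, hBeq]
    rw [Matrix.star_mul, star_star]
    calc (U * Dμ * star U * (V * Dν * star V)).trace
        = (U * (Dμ * star U * (V * Dν * star V))).trace := by
          congr 1; noncomm_ring
      _ = (Dμ * star U * (V * Dν * star V) * U).trace := Matrix.trace_mul_comm _ _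
      _ = (Dμ * (star U * V) * Dν * (star V * U)).trace := by
          congr 1; noncomm_ring
  rw [key, trace_diag_conj]

theorem stmt_13 (n : ℕ) (A B : Matrix (Fin n) (Fin n) ℂ)
    (hA : A.IsHermitian) (hB : B.IsHermitian)
    (eA eB : Fin n → ℝ) (hmA : Antitone eA) (hmB : Antitone eB)
    (hpA : ∃ σ : Equiv.Perm (Fin n), eA = hA.eigenvalues ∘ σ)
    (hpB : ∃ σ : Equiv.Perm (Fin n), eB = hB.eigenvalues ∘ σ) :
    ∑ j, (eA j - eB j) ^ 2 ≤ (((A - B) * (A - B)).trace).re := by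
  obtain ⟨σ, hσ⟩ := hpA
  obtain ⟨τ, hτ⟩ := hpB
  set μ := hA.eigenvalues with hμ
  set ν := hB.eigenvalues with hν
  set U : Matrix (Fin n) (Fin n) ℂ := (hA.eigenvectorUnitary : Matrix (Fin n) (Fin n) ℂ) with hU
  set V : Matrix (Fin n) (Fin n) ℂ := (hB.eigenvectorUnitary : Matrix (Fin n) (Fin n) ℂ) with hV
  set W : Matrix (Fin n) (Fin n) ℂ := star U * V with hW
  -- trace identities
  have hUU : star U * U = 1 := Matrix.UnitaryGroup.star_mul_self _
  have hUU' : U * star U = 1 := by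
    have := mul_eq_one_comm.mp hUU
    exact this
  have hVV : star V * V = 1 := Matrix.UnitaryGroup.star_mul_self _
  have hVV' : V * star V = 1 := mul_eq_one_comm.mp hVV
  have hAB : ((A * B).trace).re = ∑ i, ∑ j, μ i * ν j * Complex.normSq (W i j) :=
    trace_mul_herm A B hA hB
  have hAA : ((A * A).trace).re = ∑ i, μ i ^ 2 := by
    rw [trace_mul_herm A A hA hA]
    refine Finset.sum_congr rfl fun i _ => ?_
    rw [Finset.sum_eq_single i]
    · rw [← hU, hUU]
      simp [Matrix.one_apply_eq, sq]
      rfl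
    · intro j _ hj
      rw [← hU, hUU]
      simp [Matrix.one_apply_ne' hj]
    · simp
  have hBB : ((B * B).trace).re = ∑ i, ν i ^ 2 := by
    rw [trace_mul_herm B B hB hB]
    refine Finset.sum_congr rfl fun i _ => ?_
    rw [Finset.sum_eq_single i]
    · rw [← hV, hVV]
      simp [Matrix.one_apply_eq, sq]
      rfl
    · intro j _ hj
      rw [← hV, hVV]
      simp [Matrix.one_apply_ne' hj]
    · simp
  -- expand the trace of the square of the difference
  have hexp : (((A - B) * (A - B)).trace).re
      = ((A * A).trace).re + ((B * B).trace).re - 2 * ((A * B).trace).re := by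
    have h1 : (A - B) * (A - B) = A * A - A * B - B * A + B * B := by noncomm_ring
    have h2 : ((B * A).trace) = ((A * B).trace) := Matrix.trace_mul_comm B A
    rw [h1, Matrix.trace_add, Matrix.trace_sub, Matrix.trace_sub, h2]
    simp [Complex.add_re, Complex.sub_re]
    ring
  -- W is unitary, hence S = normSq ∘ W is doubly stochastic
  have hWW : W * star W = 1 := by
    rw [hW, Matrix.star_mul, star_star]
    calc star U * V * (star V * U) = star U * (V * star V) * U := by noncomm_ring
      _ = star U * U := by rw [hVV']; rw [mul_one]
      _ = 1 := hUU
  have hWW' : star W * W = 1 := mul_eq_one_comm.mp hWW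
  have hrow : ∀ i, ∑ j, Complex.normSq (W i j) = 1 := by
    intro i
    have := congrFun (congrFun hWW i) i
    rw [Matrix.mul_apply] at this
    have h2 : ∀ j, W i j * (star W : Matrix (Fin n) (Fin n) ℂ) j i
        = ((Complex.normSq (W i j) : ℝ) : ℂ) := fun j => Complex.mul_conj _
    rw [Finset.sum_congr rfl fun j _ => h2 j] at this
    have : ((∑ j, Complex.normSq (W i j) : ℝ) : ℂ) = 1 := by push_cast; rw [this]; exact Matrix.one_apply_eq _
    exact_mod_cast this
  have hcol : ∀ j, ∑ i, Complex.normSq (W i j) = 1 := by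
    intro j
    have := congrFun (congrFun hWW' j) j
    rw [Matrix.mul_apply] at this
    have h2 : ∀ i, (star W : Matrix (Fin n) (Fin n) ℂ) j i * W i j
        = ((Complex.normSq (W i j) : ℝ) : ℂ) := by
      intro i
      have : (star W : Matrix (Fin n) (Fin n) ℂ) j i = (starRingEnd ℂ) (W i j) := rfl
      rw [this, mul_comm]
      exact Complex.mul_conj _
    rw [Finset.sum_congr rfl fun i _ => h2 i] at this
    have : ((∑ i, Complex.normSq (W i j) : ℝ) : ℂ) = 1 := by push_cast; rw [this]; exact Matrix.one_apply_eq _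
    exact_mod_cast this
  -- the permuted doubly stochastic matrix
  set S : Matrix (Fin n) (Fin n) ℝ := fun i j => Complex.normSq (W (σ i) (τ j)) with hSdef
  have hSmem : S ∈ doublyStochastic ℝ (Fin n) := by
    rw [mem_doublyStochastic_iff_sum]
    refine ⟨fun i j => Complex.normSq_nonneg _, fun i => ?_, fun j => ?_⟩
    · rw [show (∑ j, S i j) = ∑ j, Complex.normSq (W (σ i) (τ j)) from rfl]
      rw [Equiv.sum_comp τ (fun j => Complex.normSq (W (σ i) j))]
      exact hrow (σ i)
    · rw [show (∑ i, S i j) = ∑ i, Complex.normSq (W (σ i) (τ j)) from rfl]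
      rw [Equiv.sum_comp σ (fun i => Complex.normSq (W i (τ j)))]
      exact hcol (τ j)
  -- main inequality on the cross term
  have hmain : ∑ i, eA i * eB i ≥ ∑ i, ∑ j, μ i * ν j * Complex.normSq (W i j) := by
    have h1 : ∑ i, ∑ j, μ i * ν j * Complex.normSq (W i j)
        = ∑ i, ∑ j, S i j * (eA i * eB j) := by
      rw [← Equiv.sum_comp σ (fun i => ∑ j, μ i * ν j * Complex.normSq (W i j))]
      refine Finset.sum_congr rfl fun i _ => ?_
      rw [← Equiv.sum_comp τ (fun j => μ (σ i) * ν j * Complex.normSq (W (σ i) j))]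
      refine Finset.sum_congr rfl fun j _ => ?_
      rw [hσ, hτ]
      simp only [Function.comp_apply, hSdef]
      ring
    rw [h1]
    exact ds_rearrange S hSmem eA eB hmA hmB
  -- sums of squares are permutation invariant
  have hsqA : ∑ j, eA j ^ 2 = ∑ j, μ j ^ 2 := by
    rw [hσ, ← Equiv.sum_comp σ (fun j => μ j ^ 2)]
    rfl
  have hsqB : ∑ j, eB j ^ 2 = ∑ j, ν j ^ 2 := by
    rw [hτ, ← Equiv.sum_comp τ (fun j => ν j ^ 2)]
    rfl
  -- put everything together
  rw [hexp, hAA, hBB, hAB]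
  have hLHS : ∑ j, (eA j - eB j) ^ 2
      = ∑ j, eA j ^ 2 + ∑ j, eB j ^ 2 - 2 * ∑ j, eA j * eB j := by
    rw [← Finset.sum_add_distrib, Finset.mul_sum, ← Finset.sum_sub_distrib]
    refine Finset.sum_congr rfl fun j _ => by ring
  rw [hLHS, hsqA, hsqB]
  have := hmain
  linarith
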